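/- Let M be an A-module algebra over a weak *-Hopf algebra A, and let λ ∈ A* be a left integral of the dual weak Hopf algebra, i.e. λ⇀a := Σ a₍₁₎·⟨λ, a₍₂₎⟩ lies in A_L for every a ∈ A. Then the map T_λ : A → M defined by T_λ(a) := (λ⇀a)▷1_M is an inner implementer of the action, i.e. T_λ(a)·m = Σ (a₍₁₎▷m)·T_λ(a₍₂₎) for all a ∈ A and m ∈ M. -/

import Mathlib

set_option synthInstance.maxHeartbeats 1000000
set_option maxHeartbeats 1000000


open scoped TensorProduct

noncomputable section

/-- The componentwise star operation on a tensor product of star algebras,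
as an additive map (it is conjugate-linear, hence not a `LinearMap`). -/
def tensorStar (A B : Type) [Ring A] [Algebra ℂ A] [StarRing A] [StarModule ℂ A]
    [Ring B] [Algebra ℂ B] [StarRing B] [StarModule ℂ B] :
    A ⊗[ℂ] B →+ A ⊗[ℂ] B :=
  TensorProduct.liftAddHom
    (AddMonoidHom.mk'
      (fun a => AddMonoidHom.mk' (fun b => star a ⊗ₜ[ℂ] star b)
        (fun x y => by
          show star a ⊗ₜ[ℂ] star (x + y) = star a ⊗ₜ[ℂ] star x + star a ⊗ₜ[ℂ] star y
          rw [star_add, TensorProduct.tmul_add]))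
      (fun x y => by
        ext b
        show star (x + y) ⊗ₜ[ℂ] star b = star x ⊗ₜ[ℂ] star b + star y ⊗ₜ[ℂ] star b
        rw [star_add, TensorProduct.add_tmul]))
    (fun r a b => by
      show star (r • a) ⊗ₜ[ℂ] star b = star a ⊗ₜ[ℂ] star (r • b)
      rw [star_smul, star_smul, TensorProduct.smul_tmul])

/-- A finite dimensional weak `*`-Hopf algebra over `ℂ` (axioms of [BNS]),
together with the derived properties of the antipode (which follow from the
axioms and are included as fields for convenience). -/
structure WeakHopfAlgebra (A : Type) [Ring A] [Algebra ℂ A] [StarRing A] [StarModule ℂ A] where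
  Δ : A →ₗ[ℂ] A ⊗[ℂ] A
  ε : A →ₗ[ℂ] ℂ
  S : A →ₗ[ℂ] A
  Sinv : A →ₗ[ℂ] A
  finite : FiniteDimensional ℂ A
  Δ_mul : ∀ x y : A, Δ (x * y) = Δ x * Δ y
  Δ_star : ∀ x : A, Δ (star x) = tensorStar A A (Δ x)
  coassoc : ∀ x : A,
    (TensorProduct.assoc ℂ A A A) ((TensorProduct.map Δ (LinearMap.id : A →ₗ[ℂ] A)) (Δ x))
      = (TensorProduct.map (LinearMap.id : A →ₗ[ℂ] A) Δ) (Δ x)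
  counit_left : ∀ x : A,
    (TensorProduct.lid ℂ A) ((TensorProduct.map ε (LinearMap.id : A →ₗ[ℂ] A)) (Δ x)) = x
  counit_right : ∀ x : A,
    (TensorProduct.rid ℂ A) ((TensorProduct.map (LinearMap.id : A →ₗ[ℂ] A) ε) (Δ x)) = x
  unit_weak :
    (Δ 1 ⊗ₜ[ℂ] (1 : A)) * ((TensorProduct.assoc ℂ A A A).symm ((1 : A) ⊗ₜ[ℂ] Δ 1))
      = (TensorProduct.map Δ (LinearMap.id : A →ₗ[ℂ] A)) (Δ 1)
  unit_weak' :
    ((TensorProduct.assoc ℂ A A A).symm ((1 : A) ⊗ₜ[ℂ] Δ 1)) * (Δ 1 ⊗ₜ[ℂ] (1 : A))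
      = (TensorProduct.map Δ (LinearMap.id : A →ₗ[ℂ] A)) (Δ 1)
  counit_weak : ∀ x y z : A,
    ε (x * y * z) = (TensorProduct.lid ℂ ℂ)
      ((TensorProduct.map (ε ∘ₗ LinearMap.mulLeft ℂ x) (ε ∘ₗ LinearMap.mulRight ℂ z)) (Δ y))
  counit_weak' : ∀ x y z : A,
    ε (x * y * z) = (TensorProduct.lid ℂ ℂ)
      ((TensorProduct.map (ε ∘ₗ LinearMap.mulRight ℂ z) (ε ∘ₗ LinearMap.mulLeft ℂ x)) (Δ y))
  antipode_left : ∀ x : A,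
    LinearMap.mul' ℂ A ((TensorProduct.map S (LinearMap.id : A →ₗ[ℂ] A)) (Δ x))
      = (TensorProduct.rid ℂ A)
          ((TensorProduct.map (LinearMap.id : A →ₗ[ℂ] A) (ε ∘ₗ LinearMap.mulLeft ℂ x)) (Δ 1))
  antipode_right : ∀ x : A,
    LinearMap.mul' ℂ A ((TensorProduct.map (LinearMap.id : A →ₗ[ℂ] A) S) (Δ x))
      = (TensorProduct.lid ℂ A)
          ((TensorProduct.map (ε ∘ₗ LinearMap.mulRight ℂ x) (LinearMap.id : A →ₗ[ℂ] A)) (Δ 1))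
  antipode_mid : ∀ x : A,
    LinearMap.mul' ℂ A
      ((TensorProduct.map (LinearMap.mul' ℂ A ∘ₗ TensorProduct.map S (LinearMap.id : A →ₗ[ℂ] A)) S)
        ((TensorProduct.map Δ (LinearMap.id : A →ₗ[ℂ] A)) (Δ x))) = S x
  S_Sinv : ∀ x : A, S (Sinv x) = x
  Sinv_S : ∀ x : A, Sinv (S x) = x
  S_antimul : ∀ x y : A, S (x * y) = S y * S x
  S_anticomul : ∀ x : A, Δ (S x) = (TensorProduct.comm ℂ A A) ((TensorProduct.map S S) (Δ x))
  S_star : ∀ x : A, star (S (star x)) = Sinv x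

/-- The set of elements commuting with everything. -/
def centerSet (R : Type) [Mul R] : Set R := {z | ∀ r : R, z * r = r * z}

namespace WeakHopfAlgebra

variable {A : Type} [Ring A] [Algebra ℂ A] [StarRing A] [StarModule ℂ A]

/-- `Σ x₍₁₎ · S(x₍₂₎)`. -/
def swIdS (W : WeakHopfAlgebra A) (x : A) : A :=
  LinearMap.mul' ℂ A ((TensorProduct.map (LinearMap.id : A →ₗ[ℂ] A) W.S) (W.Δ x))

/-- `Σ S(x₍₁₎) · x₍₂₎`. -/
def swSId (W : WeakHopfAlgebra A) (x : A) : A :=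
  LinearMap.mul' ℂ A ((TensorProduct.map W.S (LinearMap.id : A →ₗ[ℂ] A)) (W.Δ x))

/-- `Σ x₍₂₎ · S⁻¹(x₍₁₎)`. -/
def swIdSinv (W : WeakHopfAlgebra A) (x : A) : A :=
  LinearMap.mul' ℂ A
    ((TensorProduct.map (LinearMap.id : A →ₗ[ℂ] A) W.Sinv) ((TensorProduct.comm ℂ A A) (W.Δ x)))

/-- `Σ S⁻¹(x₍₂₎) · x₍₁₎`. -/
def swSinvId (W : WeakHopfAlgebra A) (x : A) : A :=
  LinearMap.mul' ℂ A
    ((TensorProduct.map W.Sinv (LinearMap.id : A →ₗ[ℂ] A)) ((TensorProduct.comm ℂ A A) (W.Δ x)))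

/-- The left subalgebra `A_L = {(φ ⊗ id)(Δ 1) : φ ∈ A*}`. -/
def AL (W : WeakHopfAlgebra A) : Set A :=
  {a | ∃ φ : A →ₗ[ℂ] ℂ,
    a = (TensorProduct.lid ℂ A) ((TensorProduct.map φ (LinearMap.id : A →ₗ[ℂ] A)) (W.Δ 1))}

/-- The right subalgebra `A_R = {(id ⊗ φ)(Δ 1) : φ ∈ A*}`. -/
def AR (W : WeakHopfAlgebra A) : Set A :=
  {a | ∃ φ : A →ₗ[ℂ] ℂ,
    a = (TensorProduct.rid ℂ A) ((TensorProduct.map (LinearMap.id : A →ₗ[ℂ] A) φ) (W.Δ 1))}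

/-- A left integral: `a · l = Σ a₍₁₎ S(a₍₂₎) · l` for all `a`. -/
def IsLeftIntegral (W : WeakHopfAlgebra A) (l : A) : Prop := ∀ a : A, a * l = W.swIdS a * l

/-- A right integral: `r · a = r · Σ S(a₍₁₎) a₍₂₎` for all `a`. -/
def IsRightIntegral (W : WeakHopfAlgebra A) (r : A) : Prop := ∀ a : A, r * a = r * W.swSId a

/-- A normalized Haar integral. -/
def IsHaar (W : WeakHopfAlgebra A) (h : A) : Prop :=
  W.IsLeftIntegral h ∧ W.IsRightIntegral h ∧ W.swSId h = 1 ∧ W.swIdS h = 1 ∧ W.S h = h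

/-- The canonical left action of a functional `λ ∈ A*` on `A`:
`λ ⇀ a = Σ a₍₁₎ · ⟨λ, a₍₂₎⟩`. -/
def lact (W : WeakHopfAlgebra A) (lam : A →ₗ[ℂ] ℂ) : A →ₗ[ℂ] A :=
  (TensorProduct.rid ℂ A).toLinearMap ∘ₗ
    (TensorProduct.map (LinearMap.id : A →ₗ[ℂ] A) lam) ∘ₗ W.Δ

/-- `λ ∈ A*` is a left integral of the dual weak Hopf algebra:
`λ ⇀ a ∈ A_L` for all `a ∈ A`. -/
def IsDualLeftIntegral (W : WeakHopfAlgebra A) (lam : A →ₗ[ℂ] ℂ) : Prop :=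
  ∀ a : A, W.lact lam a ∈ W.AL

/-- A dual pair of left integrals `(l, λ)`. -/
def IsDualPair (W : WeakHopfAlgebra A) (l : A) (lam : A →ₗ[ℂ] ℂ) : Prop :=
  W.IsLeftIntegral l ∧ W.IsDualLeftIntegral lam ∧
  W.lact lam l = 1 ∧
  (∀ a : A,
    (TensorProduct.rid ℂ A)
      ((TensorProduct.map (LinearMap.id : A →ₗ[ℂ] A) (lam ∘ₗ LinearMap.mulLeft ℂ a)) (W.Δ l))
      = W.S a) ∧
  (∀ a : A,
    (TensorProduct.lid ℂ A)
      ((TensorProduct.map (lam ∘ₗ LinearMap.mulRight ℂ a ∘ₗ W.Sinv)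
        (LinearMap.id : A →ₗ[ℂ] A)) (W.Δ l)) = a)

end WeakHopfAlgebra

/-- A (left) module `*`-algebra over a weak `*`-Hopf algebra. -/
structure ModuleAlgebra {A : Type} [Ring A] [Algebra ℂ A] [StarRing A] [StarModule ℂ A]
    (W : WeakHopfAlgebra A) (M : Type) [Ring M] [Algebra ℂ M] [StarRing M] [StarModule ℂ M] where
  act : A →ₗ[ℂ] M →ₗ[ℂ] M
  act_mul : ∀ (a b : A) (m : M), act (a * b) m = act a (act b m)
  act_one : ∀ m : M, act 1 m = m
  act_mul' : ∀ (a : A) (m n : M),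
    act a (m * n) = LinearMap.mul' ℂ M ((TensorProduct.map (act.flip m) (act.flip n)) (W.Δ a))
  act_star : ∀ (a : A) (m : M), star (act a m) = act (star (W.S a)) (star m)
  act_unit : ∀ a : A, act a 1 = act (W.swIdS a) 1

namespace ModuleAlgebra

variable {A : Type} [Ring A] [Algebra ℂ A] [StarRing A] [StarModule ℂ A]
variable {M : Type} [Ring M] [Algebra ℂ M] [StarRing M] [StarModule ℂ M]
variable {W : WeakHopfAlgebra A}

/-- `M_R = A ▷ 1_M`. -/
def MR (MA : ModuleAlgebra W M) : Set M := Set.range fun a : A => MA.act a 1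

/-- The fixed point algebra `M^A`. -/
def fixed (MA : ModuleAlgebra W M) : Set M :=
  {n | ∀ (a : A) (m : M), MA.act a (m * n) = MA.act a m * n}

end ModuleAlgebra

section Crossed

variable {A : Type} [Ring A] [Algebra ℂ A] [StarRing A] [StarModule ℂ A]
variable {M : Type} [Ring M] [Algebra ℂ M] [StarRing M] [StarModule ℂ M]
variable {W : WeakHopfAlgebra A}

/-- The subspace of `M ⊗ A` by which one divides to form the crossed product
`M ⋊ A = M ⊗_{A_L} A`. -/
def crossedRel (MA : ModuleAlgebra W M) : Submodule ℂ (M ⊗[ℂ] A) :=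
  Submodule.span ℂ
    {x | ∃ (m : M) (a b : A), b ∈ W.AL ∧
      x = (m * MA.act b 1) ⊗ₜ[ℂ] a - m ⊗ₜ[ℂ] (b * a)}

/-- The crossed product `M ⋊ A` as a vector space. -/
abbrev Crossed (MA : ModuleAlgebra W M) : Type := (M ⊗[ℂ] A) ⧸ crossedRel MA

/-- The canonical projection `M ⊗ A → M ⋊ A`; `cmk MA (m ⊗ₜ a)` is `m ⋊ a`. -/
def cmk (MA : ModuleAlgebra W M) : M ⊗[ℂ] A →ₗ[ℂ] Crossed MA := (crossedRel MA).mkQ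

/-- The embedding `M → M ⋊ A`, `m ↦ m ⋊ 1`. -/
def iM (MA : ModuleAlgebra W M) : M →ₗ[ℂ] Crossed MA :=
  cmk MA ∘ₗ (TensorProduct.mk ℂ M A).flip (1 : A)

/-- The map `A → M ⋊ A`, `a ↦ 1 ⋊ a`. -/
def iA (MA : ModuleAlgebra W M) : A →ₗ[ℂ] Crossed MA :=
  cmk MA ∘ₗ (TensorProduct.mk ℂ M A) (1 : M)

/-- The unit `1 ⋊ 1` of `M ⋊ A`. -/
def oneC (MA : ModuleAlgebra W M) : Crossed MA := cmk MA ((1 : M) ⊗ₜ[ℂ] (1 : A))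

/-- The multiplication of the crossed product `M ⋊ A`
(whose existence is the content of Theorem 3.1), as a bundled bilinear map
together with its defining formula on generators:
`(m ⋊ a)(m' ⋊ a') = Σ m (a₍₁₎ ▷ m') ⋊ a₍₂₎ a'`. -/
structure CrossedMul (MA : ModuleAlgebra W M) where
  mul : Crossed MA →ₗ[ℂ] Crossed MA →ₗ[ℂ] Crossed MA
  mul_def : ∀ (m m' : M) (a a' : A),
    mul (cmk MA (m ⊗ₜ[ℂ] a)) (cmk MA (m' ⊗ₜ[ℂ] a'))
      = cmk MA ((TensorProduct.map ((LinearMap.mulLeft ℂ m) ∘ₗ (MA.act.flip m'))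
          (LinearMap.mulRight ℂ a')) (W.Δ a))

/-- The star operation of the crossed product `M ⋊ A`
(whose existence is part of Theorem 3.1):
`(m ⋊ a)* = Σ (a₍₁₎* ▷ m*) ⋊ a₍₂₎*`. -/
structure CrossedStar (MA : ModuleAlgebra W M) where
  st : Crossed MA →+ Crossed MA
  st_smul : ∀ (c : ℂ) (x : Crossed MA), st (c • x) = (starRingEnd ℂ c) • st x
  st_def : ∀ (m : M) (a : A),
    st (cmk MA (m ⊗ₜ[ℂ] a))
      = cmk MA ((TensorProduct.map (MA.act.flip (star m)) (LinearMap.id : A →ₗ[ℂ] A))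
          (W.Δ (star a)))

/-- The multiplication on `(M ⋊ A) ⊗ B` induced by a crossed product
multiplication on `M ⋊ A` and the algebra structure of `B`. -/
def mulT (MA : ModuleAlgebra W M) (CS : CrossedMul MA) (B : Type) [Ring B] [Algebra ℂ B] :
    Crossed MA ⊗[ℂ] B →ₗ[ℂ] Crossed MA ⊗[ℂ] B →ₗ[ℂ] Crossed MA ⊗[ℂ] B :=
  TensorProduct.lift
    ((TensorProduct.mapBilinear (RingHom.id ℂ) (Crossed MA) B (Crossed MA) B).compl₁₂ CS.mul
      (LinearMap.mul ℂ B))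

end Crossed

section AuxLemmas

variable {A : Type} [Ring A] [Algebra ℂ A] [StarRing A] [StarModule ℂ A]
variable {M : Type} [Ring M] [Algebra ℂ M] [StarRing M] [StarModule ℂ M]

/-- For `b ∈ A_L`, `Δ b = Δ 1 · (b ⊗ 1)`. -/
lemma AL_coprod (W : WeakHopfAlgebra A) (b : A) (hb : b ∈ W.AL) :
    W.Δ b = W.Δ 1 * (b ⊗ₜ[ℂ] (1 : A)) := by
  obtain ⟨φ, hφ⟩ := hb
  have step1 : ∀ u : A ⊗[ℂ] A,
      W.Δ ((TensorProduct.lid ℂ A)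
          ((TensorProduct.map φ (LinearMap.id : A →ₗ[ℂ] A)) u))
        = (TensorProduct.lid ℂ (A ⊗[ℂ] A)) ((TensorProduct.map φ W.Δ) u) := by
    intro u
    induction u using TensorProduct.induction_on with
    | zero => simp
    | tmul x y => simp [TensorProduct.lid_tmul]
    | add x y hx hy => simp [map_add, hx, hy]
  have step2 : (TensorProduct.map φ W.Δ : A ⊗[ℂ] A →ₗ[ℂ] ℂ ⊗[ℂ] (A ⊗[ℂ] A))
      = (TensorProduct.map φ (LinearMap.id : A ⊗[ℂ] A →ₗ[ℂ] A ⊗[ℂ] A)) ∘ₗ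
          (TensorProduct.map (LinearMap.id : A →ₗ[ℂ] A) W.Δ) := by
    rw [← TensorProduct.map_comp]
    simp
  have h3 : (TensorProduct.map (LinearMap.id : A →ₗ[ℂ] A) W.Δ) (W.Δ 1)
      = (TensorProduct.assoc ℂ A A A)
          (((TensorProduct.assoc ℂ A A A).symm ((1 : A) ⊗ₜ[ℂ] W.Δ 1))
            * (W.Δ 1 ⊗ₜ[ℂ] (1 : A))) := by
    rw [W.unit_weak', ← W.coassoc 1]
  have step4 : ∀ u w : A ⊗[ℂ] A,
      (TensorProduct.lid ℂ (A ⊗[ℂ] A))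
        ((TensorProduct.map φ (LinearMap.id : A ⊗[ℂ] A →ₗ[ℂ] A ⊗[ℂ] A))
          ((TensorProduct.assoc ℂ A A A)
            (((TensorProduct.assoc ℂ A A A).symm ((1 : A) ⊗ₜ[ℂ] u))
              * (w ⊗ₜ[ℂ] (1 : A)))))
      = u * (((TensorProduct.lid ℂ A)
          ((TensorProduct.map φ (LinearMap.id : A →ₗ[ℂ] A)) w)) ⊗ₜ[ℂ] (1 : A)) := by
    intro u w
    induction u using TensorProduct.induction_on with
    | zero => simp
    | tmul x y =>
      induction w using TensorProduct.induction_on with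
      | zero => simp
      | tmul p q =>
        simp only [TensorProduct.assoc_symm_tmul, Algebra.TensorProduct.tmul_mul_tmul,
          TensorProduct.assoc_tmul, TensorProduct.map_tmul, LinearMap.id_coe, id_eq,
          TensorProduct.lid_tmul, one_mul, mul_one, TensorProduct.smul_tmul',
          mul_smul_comm]
      | add w1 w2 h1 h2 =>
        simp only [TensorProduct.add_tmul, mul_add, map_add, h1, h2,
          TensorProduct.tmul_add]
    | add u1 u2 h1 h2 =>
      simp only [TensorProduct.tmul_add, map_add, add_mul, mul_add, h1, h2]
  rw [hφ, step1 (W.Δ 1), step2, LinearMap.comp_apply, h3]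
  exact step4 (W.Δ 1) (W.Δ 1)

/-- If `Δ b = Δ 1 · (b ⊗ 1)`, then `b ▷ m = (b ▷ 1) · m`. -/
lemma act_AL {W : WeakHopfAlgebra A} (MA : ModuleAlgebra W M) (b : A)
    (hb : W.Δ b = W.Δ 1 * (b ⊗ₜ[ℂ] (1 : A))) (m : M) :
    MA.act b m = MA.act b 1 * m := by
  have h1 : MA.act b m = MA.act b (1 * m) := by rw [one_mul]
  rw [h1, MA.act_mul', hb]
  have key : ∀ t : A ⊗[ℂ] A,
      LinearMap.mul' ℂ M
        ((TensorProduct.map (MA.act.flip 1) (MA.act.flip m)) (t * (b ⊗ₜ[ℂ] (1 : A))))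
      = LinearMap.mul' ℂ M
        ((TensorProduct.map (MA.act.flip (MA.act b 1)) (MA.act.flip m)) t) := by
    intro t
    induction t using TensorProduct.induction_on with
    | zero => simp
    | tmul x y =>
      simp only [Algebra.TensorProduct.tmul_mul_tmul, mul_one, TensorProduct.map_tmul,
        LinearMap.mul'_apply, LinearMap.flip_apply, MA.act_mul]
    | add t1 t2 h1 h2 => simp only [add_mul, map_add, h1, h2]
  rw [key]
  have h2 := MA.act_mul' 1 (MA.act b 1) m
  rw [MA.act_one] at h2
  exact h2.symm

end AuxLemmas

/-- Lemma 4.7 of [NSW]: for a left integral `λ` of the dual weak Hopf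
algebra, `T_λ(a) = (λ ⇀ a) ▷ 1_M` is an inner implementer of the action:
`T_λ(a)·m = Σ (a₍₁₎ ▷ m)·T_λ(a₍₂₎)` for all `a ∈ A`, `m ∈ M`. -/
theorem trivial_inner_implementer
    {A M : Type} [Ring A] [Algebra ℂ A] [StarRing A] [StarModule ℂ A]
    [Ring M] [Algebra ℂ M] [StarRing M] [StarModule ℂ M]
    (W : WeakHopfAlgebra A) (MA : ModuleAlgebra W M)
    (lam : A →ₗ[ℂ] ℂ) (hlam : W.IsDualLeftIntegral lam)
    (a : A) (m : M) :
    MA.act (W.lact lam a) 1 * m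
      = LinearMap.mul' ℂ M
          ((TensorProduct.map (MA.act.flip m) ((MA.act.flip 1) ∘ₗ W.lact lam)) (W.Δ a)) := by
  have hΔb : W.Δ (W.lact lam a) = W.Δ 1 * ((W.lact lam a) ⊗ₜ[ℂ] (1 : A)) :=
    AL_coprod W _ (hlam a)
  rw [← act_AL MA _ hΔb m]
  set G : (A ⊗[ℂ] A) ⊗[ℂ] A →ₗ[ℂ] M :=
    (TensorProduct.rid ℂ M).toLinearMap ∘ₗ
      TensorProduct.map
        (LinearMap.mul' ℂ M ∘ₗ TensorProduct.map (MA.act.flip m) (MA.act.flip 1)) lam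
    with hG
  have claimA : ∀ t : A ⊗[ℂ] A,
      MA.act ((TensorProduct.rid ℂ A)
        ((TensorProduct.map (LinearMap.id : A →ₗ[ℂ] A) lam) t)) m
      = G ((TensorProduct.map W.Δ (LinearMap.id : A →ₗ[ℂ] A)) t) := by
    intro t
    induction t using TensorProduct.induction_on with
    | zero =>
      simp only [map_zero, LinearMap.zero_apply]
    | tmul x y =>
      have hx : LinearMap.mul' ℂ M
          ((TensorProduct.map (MA.act.flip m) (MA.act.flip 1)) (W.Δ x))
          = MA.act x m := by
        have := MA.act_mul' x m 1
        rw [mul_one] at this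
        exact this.symm
      simp only [TensorProduct.map_tmul, LinearMap.id_coe, id_eq,
        TensorProduct.rid_tmul, map_smul, LinearMap.smul_apply, hG,
        LinearMap.comp_apply, LinearEquiv.coe_coe, hx]
    | add t1 t2 h1 h2 =>
      simp only [map_add, LinearMap.map_add, LinearMap.add_apply, h1, h2]
  have inner : ∀ (x : A) (u : A ⊗[ℂ] A),
      MA.act.flip m x * MA.act ((TensorProduct.rid ℂ A)
        ((TensorProduct.map (LinearMap.id : A →ₗ[ℂ] A) lam) u)) 1
      = G ((TensorProduct.assoc ℂ A A A).symm (x ⊗ₜ[ℂ] u)) := by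
    intro x u
    induction u using TensorProduct.induction_on with
    | zero =>
      simp only [map_zero, LinearMap.zero_apply, TensorProduct.tmul_zero,
        LinearEquiv.map_zero, mul_zero]
    | tmul p q =>
      simp only [TensorProduct.map_tmul, LinearMap.id_coe, id_eq,
        TensorProduct.rid_tmul, TensorProduct.assoc_symm_tmul, hG,
        LinearMap.comp_apply, LinearEquiv.coe_coe, LinearMap.mul'_apply,
        LinearMap.flip_apply, map_smul, LinearMap.smul_apply, mul_smul_comm]
    | add u1 u2 h1 h2 =>
      simp only [map_add, LinearMap.map_add, LinearMap.add_apply, LinearEquiv.map_add,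
        TensorProduct.tmul_add, mul_add, h1, h2]
  have claimB : ∀ t : A ⊗[ℂ] A,
      LinearMap.mul' ℂ M
        ((TensorProduct.map (MA.act.flip m) ((MA.act.flip 1) ∘ₗ W.lact lam)) t)
      = G ((TensorProduct.assoc ℂ A A A).symm
          ((TensorProduct.map (LinearMap.id : A →ₗ[ℂ] A) W.Δ) t)) := by
    intro t
    induction t using TensorProduct.induction_on with
    | zero =>
      simp only [map_zero, LinearEquiv.map_zero]
    | tmul x y =>
      have h := inner x (W.Δ y)
      simp only [TensorProduct.map_tmul, LinearMap.id_coe, id_eq,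
        LinearMap.comp_apply, LinearMap.mul'_apply]
      rw [← h]
      rfl
    | add t1 t2 h1 h2 =>
      simp only [map_add, LinearMap.map_add, LinearEquiv.map_add, h1, h2]
  have hco : (TensorProduct.assoc ℂ A A A).symm
      ((TensorProduct.map (LinearMap.id : A →ₗ[ℂ] A) W.Δ) (W.Δ a))
      = (TensorProduct.map W.Δ (LinearMap.id : A →ₗ[ℂ] A)) (W.Δ a) := by
    rw [← W.coassoc a]
    exact (TensorProduct.assoc ℂ A A A).symm_apply_apply _
  have e1 : MA.act (W.lact lam a) m
      = G ((TensorProduct.map W.Δ (LinearMap.id : A →ₗ[ℂ] A)) (W.Δ a)) := by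
    have hl : W.lact lam a = (TensorProduct.rid ℂ A)
        ((TensorProduct.map (LinearMap.id : A →ₗ[ℂ] A) lam) (W.Δ a)) := rfl
    rw [hl]
    exact claimA (W.Δ a)
  rw [e1, claimB (W.Δ a), hco]
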